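/- arXiv:2601.02159 — 3 statements merged into one kernel-verified Lean document; each statement's English description precedes it below -/
import Mathlib

section
/- Let (V, g, T) be a para-Hermitian vector space and A : V → V a g-symmetric endomorphism commuting with T, with dim V = 4 (so n = 2). Then A has at most two distinct complex eigenvalues, and each eigenvalue of A has algebraic multiplicity at least 2. -/
open Module Polynomial Matrix

lemma charpoly_transpose_aux {n : Type*} [Fintype n] [DecidableEq n]
    {R : Type*} [CommRing R] (M : Matrix n n R) : Mᵀ.charpoly = M.charpoly := by
  unfold Matrix.charpoly
  rw [← Matrix.det_transpose (Matrix.charmatrix M)]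
  congr 1
  ext i j
  by_cases h : i = j
  · subst h; simp [Matrix.charmatrix_apply, Matrix.diagonal]
  · simp [Matrix.charmatrix_apply, Matrix.diagonal, h, Ne.symm h]

set_option maxHeartbeats 1000000 in
/-- In real dimension `4`, a `g`-symmetric endomorphism commuting with the
para-complex structure `T` has at most two distinct complex eigenvalues, each
of algebraic multiplicity at least `2`. -/
theorem stmt5 {V : Type*} [AddCommGroup V] [Module ℝ V] [FiniteDimensional ℝ V]
    (hV : finrank ℝ V = 4)
    (g : V →ₗ[ℝ] V →ₗ[ℝ] ℝ)
    (hsymm : ∀ x y, g x y = g y x)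
    (hnd : ∀ x, (∀ y, g x y = 0) → x = 0)
    (T : V →ₗ[ℝ] V) (hT : T ∘ₗ T = LinearMap.id)
    (hplus : finrank ℝ (LinearMap.ker (T - LinearMap.id)) = 2)
    (hminus : finrank ℝ (LinearMap.ker (T + LinearMap.id)) = 2)
    (hcompat : ∀ x y, g (T x) (T y) = - g x y)
    (A : V →ₗ[ℝ] V)
    (hAT : A ∘ₗ T = T ∘ₗ A)
    (hAsym : ∀ x y, g (A x) y = g x (A y)) :
    ((A.charpoly.map (algebraMap ℝ ℂ)).roots.toFinset.card ≤ 2) ∧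
    (∀ μ : ℂ, (A.charpoly.map (algebraMap ℝ ℂ)).IsRoot μ →
      2 ≤ (A.charpoly.map (algebraMap ℝ ℂ)).rootMultiplicity μ) := by
  classical
  set P := LinearMap.ker (T - LinearMap.id) with hPdef
  set Q := LinearMap.ker (T + LinearMap.id) with hQdef
  have hTT : ∀ x, T (T x) = x := fun x => LinearMap.congr_fun hT x
  have hmemP : ∀ x : V, x ∈ P ↔ T x = x := by
    intro x
    simp [hPdef, LinearMap.mem_ker, sub_eq_zero]
  have hmemQ : ∀ x : V, x ∈ Q ↔ T x = -x := by
    intro x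
    rw [hQdef, LinearMap.mem_ker]
    constructor
    · intro h; have := congrArg (fun y => y - x) h; simpa [add_sub_cancel_right] using
        eq_neg_of_add_eq_zero_left h
    · intro h; simp [h]
  -- complementarity
  have hc : IsCompl P Q := by
    constructor
    · rw [disjoint_iff_inf_le]
      rintro x ⟨hx1, hx2⟩
      have h1 : T x = x := (hmemP x).1 hx1
      have h2 : T x = -x := (hmemQ x).1 hx2
      have h3 : x = -x := h1.symm.trans h2
      have h4 : (2 : ℝ) • x = 0 := by
        rw [two_smul]; nth_rewrite 1 [h3]; simp
      simpa using (smul_eq_zero.mp h4).resolve_left (by norm_num)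
    · rw [codisjoint_iff_le_sup]
      intro x _
      have hxp : ((1 : ℝ)/2) • (x + T x) ∈ P := by
        rw [hmemP]; simp [hTT x, add_comm]
      have hxq : ((1 : ℝ)/2) • (x - T x) ∈ Q := by
        rw [hmemQ]
        have hTs : T (x - T x) = T x - x := by rw [map_sub, hTT]
        rw [LinearMap.map_smul, hTs]
        module
      have : x = ((1 : ℝ)/2) • (x + T x) + ((1 : ℝ)/2) • (x - T x) := by module
      rw [this]
      exact Submodule.add_mem_sup hxp hxq
  have hATx : ∀ x, A (T x) = T (A x) := fun x => LinearMap.congr_fun hAT x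
  have hAP : ∀ x ∈ P, A x ∈ P := by
    intro x hx; rw [hmemP] at hx ⊢; rw [← hATx, hx]
  have hAQ : ∀ x ∈ Q, A x ∈ Q := by
    intro x hx; rw [hmemQ] at hx ⊢; rw [← hATx, hx, map_neg]
  set AP := A.restrict hAP with hAPdef
  set AQ := A.restrict hAQ with hAQdef
  -- charpoly A = charpoly AP * charpoly AQ
  set e := Submodule.prodEquivOfIsCompl P Q hc with hedef
  have hconj : e.conj (AP.prodMap AQ) = A := by
    apply LinearMap.ext
    intro v
    obtain ⟨x, rfl⟩ := e.surjective v
    rw [LinearEquiv.conj_apply]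
    simp only [LinearMap.coe_comp, Function.comp_apply, LinearEquiv.coe_coe,
      LinearEquiv.symm_apply_apply, LinearMap.prodMap_apply, Prod.map]
    show e (AP x.1, AQ x.2) = A (e x)
    rw [hedef]
    simp only [Submodule.coe_prodEquivOfIsCompl', map_add]
    congr 1 <;> simp [hAPdef, hAQdef, LinearMap.restrict_apply]
  have hfactor : A.charpoly = AP.charpoly * AQ.charpoly := by
    rw [← hconj, LinearEquiv.charpoly_conj, LinearMap.charpoly_prodMap]
  -- isotropy
  have hPiso : ∀ x y : V, x ∈ P → y ∈ P → g x y = 0 := by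
    intro x y hx hy
    have := hcompat x y
    rw [(hmemP x).1 hx, (hmemP y).1 hy] at this
    linarith
  have hQiso : ∀ x y : V, x ∈ Q → y ∈ Q → g x y = 0 := by
    intro x y hx hy
    have := hcompat x y
    rw [(hmemQ x).1 hx, (hmemQ y).1 hy] at this
    simp only [map_neg, LinearMap.neg_apply, neg_neg] at this
    linarith
  -- the pairing Q → Dual P
  set Φl : Q →ₗ[ℝ] Module.Dual ℝ P :=
    (LinearMap.lcomp ℝ ℝ P.subtype) ∘ₗ g.flip ∘ₗ Q.subtype with hΦldef
  have hΦl_apply : ∀ (q : Q) (p : P), Φl q p = g (p : V) (q : V) := by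
    intro q p; simp [hΦldef, LinearMap.flip_apply]
  have hΦl_inj : Function.Injective Φl := by
    rw [← LinearMap.ker_eq_bot, Submodule.eq_bot_iff]
    intro q hq
    rw [LinearMap.mem_ker] at hq
    have hgq : ∀ y : V, g (q : V) y = 0 := by
      intro y
      obtain ⟨x, rfl⟩ := e.surjective y
      have h1 : g (q : V) (x.1 : V) = 0 := by
        rw [hsymm, ← hΦl_apply q x.1, hq]
        rfl
      have h2 : g (q : V) (x.2 : V) = 0 := hQiso _ _ q.2 x.2.2
      rw [hedef, Submodule.coe_prodEquivOfIsCompl', map_add, h1, h2, add_zero]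
    exact Subtype.ext (hnd _ hgq)
  have hΦl_bij : Function.Bijective Φl := by
    refine ⟨hΦl_inj, ?_⟩
    rw [← LinearMap.injective_iff_surjective_of_finrank_eq_finrank ?_] at *
    · exact hΦl_inj
    · rw [Subspace.dual_finrank_eq, hminus, hplus]
  set Φ := LinearEquiv.ofBijective Φl hΦl_bij with hΦdef
  -- bases
  set bP : Basis (Fin 2) ℝ P := finBasisOfFinrankEq ℝ P hplus with hbPdef
  set bQ : Basis (Fin 2) ℝ Q := bP.dualBasis.map Φ.symm with hbQdef
  have hΦbQ : ∀ j, Φl (bQ j) = bP.dualBasis j := by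
    intro j
    rw [hbQdef, Basis.map_apply]
    exact Φ.apply_symm_apply _
  have horth : ∀ i j, g (bP i : V) (bQ j : V) = if i = j then 1 else 0 := by
    intro i j
    rw [← hΦl_apply, hΦbQ, Basis.dualBasis_apply_self]
  have hreprQ : ∀ (y : Q) (i : Fin 2), g (bP i : V) (y : V) = bQ.repr y i := by
    intro y i
    rw [← hΦl_apply]
    have : bQ.repr y = bP.dualBasis.repr (Φ y) := by
      rw [hbQdef, Basis.map_repr]
      simp
    rw [this, Basis.dualBasis_repr]
    rfl
  have hreprP : ∀ (x : P) (j : Fin 2), g (x : V) (bQ j : V) = bP.repr x j := by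
    intro x j
    conv_lhs => rw [← bP.sum_repr x]
    push_cast
    rw [map_sum]
    simp only [LinearMap.coe_sum, Finset.sum_apply]
    rw [Finset.sum_eq_single j]
    · simp [horth]
    · intro i _ hij
      simp [Submodule.coe_smul, _root_.map_smul, horth, hij]
    · intro h; exact absurd (Finset.mem_univ j) h
  -- matrices
  set MP := LinearMap.toMatrix bP bP AP with hMPdef
  set MQ := LinearMap.toMatrix bQ bQ AQ with hMQdef
  have hMQT : MQ = MPᵀ := by
    ext i j
    rw [hMQdef, LinearMap.toMatrix_apply, Matrix.transpose_apply, hMPdef,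
      LinearMap.toMatrix_apply]
    rw [← hreprQ (AQ (bQ j)) i, ← hreprP (AP (bP i)) j]
    have h1 : ((AQ (bQ j) : Q) : V) = A (bQ j : V) := by
      simp [hAQdef, LinearMap.restrict_apply]
    have h2 : ((AP (bP i) : P) : V) = A (bP i : V) := by
      simp [hAPdef, LinearMap.restrict_apply]
    rw [h1, h2, ← hAsym]
  have hcharQP : AQ.charpoly = AP.charpoly := by
    rw [← LinearMap.charpoly_toMatrix AQ bQ, ← LinearMap.charpoly_toMatrix AP bP]
    rw [← hMQdef, ← hMPdef, hMQT, charpoly_transpose_aux]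
  have hsq : A.charpoly = AP.charpoly ^ 2 := by
    rw [hfactor, hcharQP, sq]
  -- endgame
  set p : ℂ[X] := AP.charpoly.map (algebraMap ℝ ℂ) with hpdef
  have hpmonic : p.Monic := (AP.charpoly_monic).map _
  have hpne : p ≠ 0 := hpmonic.ne_zero
  have hpdeg : p.natDegree = 2 := by
    rw [hpdef, (AP.charpoly_monic).natDegree_map, LinearMap.charpoly_natDegree, hplus]
  have hmap : A.charpoly.map (algebraMap ℝ ℂ) = p ^ 2 := by
    rw [hsq, Polynomial.map_pow, hpdef]
  rw [hmap]
  constructor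
  · rw [roots_pow, Multiset.toFinset_nsmul _ 2 (by norm_num)]
    calc p.roots.toFinset.card ≤ Multiset.card p.roots := Multiset.toFinset_card_le _
      _ ≤ p.natDegree := p.card_roots'
      _ = 2 := hpdeg
  · intro μ hμ
    have hroot : p.IsRoot μ := by
      have : (p.eval μ) ^ 2 = 0 := by
        simpa [Polynomial.IsRoot, Polynomial.eval_pow] using hμ
      exact pow_eq_zero_iff (by norm_num) |>.mp this
    have h1 : 1 ≤ p.rootMultiplicity μ := (Polynomial.rootMultiplicity_pos hpne).2 hroot
    have : (p ^ 2).rootMultiplicity μ = 2 * p.rootMultiplicity μ := by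
      rw [sq, Polynomial.rootMultiplicity_mul (by
        rw [← sq]; exact pow_ne_zero 2 hpne), two_mul]
    omega
end

section
/- Let X₁, X₂, Y₁, Y₂ be vector fields on a smooth manifold M, linearly independent at each point, satisfying the bracket relations [X₂,Y₂]=0, [X₁,X₂] = αX₁ + βX₂, [X₂,Y₁] = ξX₂ + ηY₁, [X₁,Y₂] = δX₁ + φY₂, and [Y₁,Y₂] = μY₁ + νY₂ + γX₁ for smooth functions α, β, ξ, η, δ, φ, μ, ν, γ. Then the Jacobi identity forces the following relations among the coefficient functions: X₂(δ) − Y₂(α) = 0, X₂(γ) − (α+η)γ = 0, and X₂(μ) + Y₂(η) = 0. -/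
private lemma lieSmulRight {A : Type*} [CommRing A] [Algebra ℝ A]
    (X Y : Derivation ℝ A A) (a : A) :
    ⁅X, a • Y⁆ = a • ⁅X, Y⁆ + X a • Y := by
  ext b
  simp only [Derivation.commutator_apply, Derivation.coe_smul, Pi.smul_apply,
    Derivation.add_apply, Derivation.smul_apply, smul_eq_mul, Derivation.leibniz]
  ring

private lemma lieSmulLeft {A : Type*} [CommRing A] [Algebra ℝ A]
    (X Y : Derivation ℝ A A) (a : A) :
    ⁅a • X, Y⁆ = a • ⁅X, Y⁆ - Y a • X := by
  ext b
  simp only [Derivation.commutator_apply, Derivation.coe_smul, Pi.smul_apply,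
    Derivation.sub_apply, Derivation.add_apply, Derivation.smul_apply, smul_eq_mul,
    Derivation.leibniz]
  ring

/-- Jacobi-identity compatibility conditions for the bracket relations of an
adapted frame of vector fields (formulated via derivations of the algebra `A`
of smooth functions; pointwise linear independence is expressed as
`A`-linear independence of the derivations). -/
theorem stmt17 {A : Type*} [CommRing A] [Algebra ℝ A]
    (X₁ X₂ Y₁ Y₂ : Derivation ℝ A A)
    (hindep : ∀ a b c d : A,
      a • X₁ + b • X₂ + c • Y₁ + d • Y₂ = 0 → a = 0 ∧ b = 0 ∧ c = 0 ∧ d = 0)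
    (α β ξ η δ φ μ ν γ : A)
    (h1 : ⁅X₂, Y₂⁆ = 0)
    (h2 : ⁅X₁, X₂⁆ = α • X₁ + β • X₂)
    (h3 : ⁅X₂, Y₁⁆ = ξ • X₂ + η • Y₁)
    (h4 : ⁅X₁, Y₂⁆ = δ • X₁ + φ • Y₂)
    (h5 : ⁅Y₁, Y₂⁆ = μ • Y₁ + ν • Y₂ + γ • X₁) :
    X₂ δ - Y₂ α = 0 ∧ X₂ γ - (α + η) * γ = 0 ∧ X₂ μ + Y₂ η = 0 := by
  have hX₂X₁ : ⁅X₂, X₁⁆ = -(α • X₁ + β • X₂) := by rw [← lie_skew, h2]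
  have hY₂Y₁ : ⁅Y₂, Y₁⁆ = -(μ • Y₁ + ν • Y₂ + γ • X₁) := by rw [← lie_skew, h5]
  have j1 := leibniz_lie X₁ X₂ Y₂
  rw [h1, lie_zero, h2, h4, add_lie, lie_add, lieSmulLeft, lieSmulLeft, lieSmulRight,
    lieSmulRight, h1, h4, hX₂X₁] at j1
  have e1 : (X₂ δ - Y₂ α) • X₁ + (-(Y₂ β) - δ * β) • X₂ + (0 : A) • Y₁
      + (α * φ + X₂ φ) • Y₂ = 0 := by
    linear_combination (norm := module) -j1
  have j2 := leibniz_lie X₂ Y₁ Y₂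
  rw [h1, lie_zero, add_zero, h5, h3, lie_add, lie_add, add_lie, lieSmulRight, lieSmulRight,
    lieSmulRight, lieSmulLeft, lieSmulLeft, h1, h3, h5, hX₂X₁] at j2
  have e2 : (X₂ γ - (α + η) * γ) • X₁ + (μ * ξ - γ * β + Y₂ ξ) • X₂
      + (X₂ μ + Y₂ η) • Y₁ + (X₂ ν - η * ν) • Y₂ = 0 := by
    linear_combination (norm := module) j2
  obtain ⟨p1, _, _, _⟩ := hindep _ _ _ _ e1
  obtain ⟨q1, _, q3, _⟩ := hindep _ _ _ _ e2
  exact ⟨p1, q1, q3⟩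
end

section
/- Let (V, g, T) be a 2n-dimensional para-Hermitian vector space, A a g-symmetric endomorphism commuting with T, and define p(t) := det(A − t·id) for t ∈ ℝ. Then there exists a polynomial q of degree n with real coefficients and leading coefficient (−1)ⁿ such that p(t) = q(t)² for all t; in particular det(A − t·id) ≥ 0 for every real t. -/
open Module Polynomial

section Aux

variable {R : Type*} [CommRing R]

lemma aux_charmatrix_transpose {m : Type*} [Fintype m] [DecidableEq m] (M : Matrix m m R) :
    Matrix.charmatrix M.transpose = (Matrix.charmatrix M).transpose := by
  ext i j
  by_cases h : i = j
  · subst h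
    simp [Matrix.charmatrix_apply_eq]
  · simp [Matrix.charmatrix_apply_ne _ _ _ h, Matrix.charmatrix_apply_ne _ _ _ (Ne.symm h)]

lemma aux_charpoly_transpose {m : Type*} [Fintype m] [DecidableEq m] (M : Matrix m m R) :
    M.transpose.charpoly = M.charpoly := by
  rw [Matrix.charpoly, Matrix.charpoly, aux_charmatrix_transpose, Matrix.det_transpose]

lemma aux_matrix_charpoly_eval {m : Type*} [Fintype m] [DecidableEq m]
    (M : Matrix m m R) (r : R) :
    M.charpoly.eval r = (r • (1 : Matrix m m R) - M).det := by
  rw [Matrix.charpoly, _root_.eval_det, Matrix.matPolyEquiv_charmatrix]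
  rw [eval_sub, eval_X, eval_C]
  congr 1
  rw [Matrix.smul_eq_diagonal_mul, Matrix.mul_one, Matrix.scalar_apply]

lemma aux_lm_charpoly_eval {V : Type*} [AddCommGroup V] [Module ℝ V] [FiniteDimensional ℝ V]
    (f : V →ₗ[ℝ] V) (r : ℝ) :
    f.charpoly.eval r = LinearMap.det (r • LinearMap.id - f) := by
  classical
  let b := Module.finBasis ℝ V
  rw [← LinearMap.charpoly_toMatrix f b, aux_matrix_charpoly_eval,
    ← LinearMap.det_toMatrix b]
  congr 1
  rw [map_sub, map_smul, LinearMap.toMatrix_id]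

lemma aux_charpoly_dualMap {V : Type*} [AddCommGroup V] [Module ℝ V] [FiniteDimensional ℝ V]
    (f : V →ₗ[ℝ] V) : f.dualMap.charpoly = f.charpoly := by
  classical
  let b := Module.finBasis ℝ V
  rw [← LinearMap.charpoly_toMatrix f b,
    ← LinearMap.charpoly_toMatrix f.dualMap b.dualBasis,
    LinearMap.dualMap_def, LinearMap.toMatrix_transpose, aux_charpoly_transpose]

end Aux

/-- For a `g`-symmetric endomorphism `A` commuting with `T` on a
`2n`-dimensional para-Hermitian space, `det(A − t·id)` is the square of a real
polynomial of degree `n` with leading coefficient `(−1)ⁿ`; in particular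
`det(A − t·id) ≥ 0` for all real `t`. -/
theorem stmt18 {V : Type*} [AddCommGroup V] [Module ℝ V] [FiniteDimensional ℝ V]
    (n : ℕ) (hV : finrank ℝ V = 2 * n)
    (g : V →ₗ[ℝ] V →ₗ[ℝ] ℝ)
    (hsymm : ∀ x y, g x y = g y x)
    (hnd : ∀ x, (∀ y, g x y = 0) → x = 0)
    (T : V →ₗ[ℝ] V) (hT : T ∘ₗ T = LinearMap.id)
    (hplus : finrank ℝ (LinearMap.ker (T - LinearMap.id)) = n)
    (hminus : finrank ℝ (LinearMap.ker (T + LinearMap.id)) = n)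
    (hcompat : ∀ x y, g (T x) (T y) = - g x y)
    (A : V →ₗ[ℝ] V)
    (hAT : A ∘ₗ T = T ∘ₗ A)
    (hAsym : ∀ x y, g (A x) y = g x (A y)) :
    (∃ q : Polynomial ℝ, q.natDegree = n ∧ q.leadingCoeff = (-1 : ℝ) ^ n ∧
      ∀ t : ℝ, LinearMap.det (A - t • LinearMap.id) = (q.eval t) ^ 2) ∧
    ∀ t : ℝ, 0 ≤ LinearMap.det (A - t • LinearMap.id) := by
  classical
  set Vp := LinearMap.ker (T - LinearMap.id) with hVpdef
  set Vm := LinearMap.ker (T + LinearMap.id) with hVmdef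
  have hTT : ∀ x, T (T x) = x := fun x => by
    simpa using LinearMap.congr_fun hT x
  have memVp : ∀ x, x ∈ Vp ↔ T x = x := by
    intro x
    simp [hVpdef, LinearMap.mem_ker, sub_eq_zero]
  have memVm : ∀ x, x ∈ Vm ↔ T x = -x := by
    intro x
    simp [hVmdef, LinearMap.mem_ker, add_eq_zero_iff_eq_neg]
  have hcompl : IsCompl Vp Vm := by
    constructor
    · rw [Submodule.disjoint_def]
      intro x hxp hxm
      have h1 : T x = x := (memVp x).mp hxp
      have h2 : T x = -x := (memVm x).mp hxm
      rw [h1] at h2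
      have h3 : (2 : ℝ) • x = 0 := by
        rw [two_smul]
        exact eq_neg_iff_add_eq_zero.mp h2
      rcases smul_eq_zero.mp h3 with h | h
      · norm_num at h
      · exact h
    · rw [codisjoint_iff, eq_top_iff]
      intro x _
      have hx : x = (2⁻¹ : ℝ) • (x + T x) + (2⁻¹ : ℝ) • (x - T x) := by
        rw [smul_add, smul_sub]
        rw [show (2⁻¹:ℝ) • x + (2⁻¹:ℝ) • T x + ((2⁻¹:ℝ) • x - (2⁻¹:ℝ) • T x)
            = ((2⁻¹:ℝ) + (2⁻¹:ℝ)) • x by rw [add_smul]; abel]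
        norm_num
      rw [hx]
      refine Submodule.add_mem_sup ?_ ?_
      · rw [memVp]
        rw [map_smul, map_add, hTT]
        rw [add_comm]
      · rw [memVm]
        rw [map_smul, map_sub, hTT, ← smul_neg]
        congr 1
        abel
  have hATx : ∀ x, A (T x) = T (A x) := fun x => LinearMap.congr_fun hAT x
  have hAp : ∀ x ∈ Vp, A x ∈ Vp := by
    intro x hx
    rw [memVp] at hx ⊢
    rw [← hATx, hx]
  have hAm : ∀ x ∈ Vm, A x ∈ Vm := by
    intro x hx
    rw [memVm] at hx ⊢
    rw [← hATx, hx, map_neg]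
  set Ap : Vp →ₗ[ℝ] Vp := A.restrict hAp with hApdef
  set Am : Vm →ₗ[ℝ] Vm := A.restrict hAm with hAmdef
  set e : (Vp × Vm) ≃ₗ[ℝ] V := Submodule.prodEquivOfIsCompl Vp Vm hcompl with hedef
  -- A is conjugate to Ap.prodMap Am
  have hkey : A = e.conj (Ap.prodMap Am) := by
    apply LinearMap.ext
    intro v
    conv_lhs => rw [← e.apply_symm_apply v]
    rw [LinearEquiv.conj_apply]
    simp only [LinearMap.coe_comp, Function.comp_apply, LinearEquiv.coe_coe]
    set p := e.symm v with hp
    show A (e p) = e ((Ap.prodMap Am) p)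
    obtain ⟨p1, p2⟩ := p
    rw [Submodule.coe_prodEquivOfIsCompl' , Submodule.coe_prodEquivOfIsCompl']
    simp only [LinearMap.prodMap_apply]
    rw [map_add, LinearMap.restrict_coe_apply, LinearMap.restrict_coe_apply]
  have charA : A.charpoly = Ap.charpoly * Am.charpoly := by
    rw [hkey, LinearEquiv.charpoly_conj, LinearMap.charpoly_prodMap]
  -- g vanishes on Vm × Vm
  have hgmm : ∀ y z : V, y ∈ Vm → z ∈ Vm → g y z = 0 := by
    intro y z hy hz
    have h1 := hcompat y z
    rw [(memVm y).mp hy, (memVm z).mp hz] at h1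
    simp at h1
    linarith
  -- the pairing map Vm → Dual Vp
  set Φ₀ : Vm →ₗ[ℝ] Module.Dual ℝ Vp :=
    Vp.subtype.dualMap ∘ₗ g.flip ∘ₗ Vm.subtype with hΦ₀def
  have hΦ₀apply : ∀ (y : Vm) (x : Vp), Φ₀ y x = g (x : V) (y : V) := by
    intro y x
    rfl
  have hΦinj : Function.Injective Φ₀ := by
    rw [← LinearMap.ker_eq_bot, Submodule.eq_bot_iff]
    intro y hy
    rw [LinearMap.mem_ker] at hy
    have hyv : ∀ z : V, g z (y : V) = 0 := by
      intro z
      have hz : z ∈ Vp ⊔ Vm := by rw [hcompl.sup_eq_top]; trivial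
      obtain ⟨a, ha, b, hb, rfl⟩ := Submodule.mem_sup.mp hz
      rw [map_add, LinearMap.add_apply]
      have h1 : g a (y : V) = 0 := by
        have := congrArg (fun f => f ⟨a, ha⟩) hy
        simpa [hΦ₀apply] using this
      rw [h1, hgmm b y hb y.2]
      ring
    have : (y : V) = 0 := hnd _ fun w => (hsymm _ w).trans (hyv w)
    exact Subtype.ext this
  have hfinVp : finrank ℝ Vp = n := hplus
  have hfinVm : finrank ℝ Vm = n := hminus
  have hΦsurj : Function.Surjective Φ₀ := by
    rw [← LinearMap.injective_iff_surjective_of_finrank_eq_finrank]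
    · exact hΦinj
    · rw [hfinVm, Subspace.dual_finrank_eq, hfinVp]
  set Φ : Vm ≃ₗ[ℝ] Module.Dual ℝ Vp := LinearEquiv.ofBijective Φ₀ ⟨hΦinj, hΦsurj⟩
    with hΦdef
  have hΦap : ∀ y : Vm, Φ y = Φ₀ y := fun y => rfl
  have hcomm : ∀ y : Vm, Φ₀ (Am y) = Ap.dualMap (Φ₀ y) := by
    intro y
    apply LinearMap.ext
    intro x
    rw [hΦ₀apply]
    show g (x : V) ((Am y : Vm) : V) = Φ₀ y (Ap x)
    rw [hΦ₀apply]
    rw [LinearMap.restrict_coe_apply, LinearMap.restrict_coe_apply]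
    exact (hAsym (x : V) (y : V)).symm
  have hconj : Φ.conj Am = Ap.dualMap := by
    apply LinearMap.ext
    intro φ
    rw [LinearEquiv.conj_apply]
    simp only [LinearMap.coe_comp, Function.comp_apply, LinearEquiv.coe_coe]
    conv_rhs => rw [← Φ.apply_symm_apply φ]
    rw [hΦap, hΦap]
    exact hcomm (Φ.symm φ)
  have charAm : Am.charpoly = Ap.charpoly := by
    rw [← LinearEquiv.charpoly_conj Φ Am, hconj, aux_charpoly_dualMap]
  have hmonic : Ap.charpoly.Monic := LinearMap.charpoly_monic Ap
  have hdeg : Ap.charpoly.natDegree = n := by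
    rw [LinearMap.charpoly_natDegree, hfinVp]
  -- the polynomial q
  set q : Polynomial ℝ := C ((-1 : ℝ) ^ n) * Ap.charpoly with hqdef
  have heval : ∀ t : ℝ, LinearMap.det (A - t • LinearMap.id) = (q.eval t) ^ 2 := by
    intro t
    have hdet : LinearMap.det (A - t • LinearMap.id) = A.charpoly.eval t := by
      have h1 : A - t • LinearMap.id = (-1 : ℝ) • (t • LinearMap.id - A) := by
        rw [neg_smul, one_smul, neg_sub]
      rw [h1, LinearMap.det_smul, hV, ← aux_lm_charpoly_eval, pow_mul]
      norm_num
    rw [hdet, charA, charAm, hqdef]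
    rw [eval_mul, eval_mul, eval_C, mul_pow]
    have h1 : ((-1 : ℝ) ^ n) ^ 2 = 1 := by
      rw [← pow_mul, mul_comm, pow_mul]
      norm_num
    rw [h1, one_mul, sq]
  refine ⟨⟨q, ?_, ?_, heval⟩, fun t => (heval t).symm ▸ sq_nonneg _⟩
  · rw [hqdef, natDegree_C_mul (pow_ne_zero _ (by norm_num) : ((-1:ℝ)^n) ≠ 0), hdeg]
  · rw [hqdef, leadingCoeff_mul, leadingCoeff_C, hmonic.leadingCoeff, mul_one]
end
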